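/- Let n ≥ 2 be an integer and M > 0. Then for every continuously differentiable f : [2M, ∞) → ℝ satisfying ∫_{2M}^{∞} ( s² f′(s)² + f(s)² ) ds < ∞, one has ∫_{2M}^{∞} [ s(s − 2M) f′(s)² + ( (n+2)/(n−1)² − 2Mn²/((n−1)² s) ) f(s)² ] ds ≥ 0. -/

import Mathlib

open MeasureTheory Set Filter Topology

lemma hardy_pointwise (m M s x y : ℝ) (hm : 2 ≤ m) (hM : 0 < M) (hs : 2*M ≤ s) :
    (-(m/(m-1))) * y^2 + (-(m/(m-1))) * (s-2*M) * (2*y*x)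
      ≤ s*(s-2*M)*x^2 + ((m+2)/(m-1)^2 - 2*M*m^2/((m-1)^2*s))*y^2 := by
  have hs0 : 0 < s := lt_of_lt_of_le (by linarith) hs
  have hm1 : (0:ℝ) < m - 1 := by linarith
  have key : s*(s-2*M)*x^2 + ((m+2)/(m-1)^2 - 2*M*m^2/((m-1)^2*s))*y^2
      - ((-(m/(m-1))) * y^2 + (-(m/(m-1))) * (s-2*M) * (2*y*x))
      = ((s-2*M)*((m-1)*s*x + m*y)^2 + 2*s*y^2) / ((m-1)^2*s) := by
    field_simp
    ring
  have h2 : (0:ℝ) ≤ ((s-2*M)*((m-1)*s*x + m*y)^2 + 2*s*y^2) / ((m-1)^2*s) := by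
    apply div_nonneg _ (by positivity)
    have := sq_nonneg ((m-1)*s*x + m*y)
    nlinarith [sq_nonneg y]
  linarith [key ▸ h2]

set_option maxHeartbeats 1000000 in
theorem hardy_inequality_covector
    (n : ℕ) (hn : 2 ≤ n) (M : ℝ) (hM : 0 < M)
    (f : ℝ → ℝ) (hf : ContDiffOn ℝ 1 f (Ici (2*M)))
    (hfin : IntegrableOn (fun s => s^2 * (deriv f s)^2 + (f s)^2) (Ici (2*M))) :
    0 ≤ ∫ s in Ici (2*M),
      (s*(s - 2*M) * (deriv f s)^2
        + (((n:ℝ) + 2)/((n:ℝ) - 1)^2 - 2*M*(n:ℝ)^2/(((n:ℝ) - 1)^2 * s)) * (f s)^2) := by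
  have hm : (2:ℝ) ≤ (n:ℝ) := by exact_mod_cast hn
  set m : ℝ := (n:ℝ) with hmdef
  have hm1 : (0:ℝ) < m - 1 := by linarith
  have ha0 : (0:ℝ) < 2*M := by linarith
  set G : ℝ → ℝ := fun s => s*(s - 2*M) * (deriv f s)^2
      + ((m + 2)/(m - 1)^2 - 2*M*m^2/((m - 1)^2 * s)) * (f s)^2 with hGdef
  show 0 ≤ ∫ s in Ici (2*M), G s
  -- measurability
  have hfc : ContinuousOn f (Ici (2*M)) := hf.continuousOn
  have hfm : AEMeasurable f (volume.restrict (Ici (2*M))) :=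
    hfc.aemeasurable measurableSet_Ici
  have hdm : Measurable (deriv f) := measurable_deriv f
  have hGm : AEStronglyMeasurable G (volume.restrict (Ici (2*M))) := by
    apply AEMeasurable.aestronglyMeasurable
    apply AEMeasurable.add
    · exact (((measurable_id.mul (measurable_id.sub measurable_const)).mul
        (hdm.pow_const 2)).aemeasurable)
    · exact ((measurable_const.sub
        (measurable_const.div (measurable_const.mul measurable_id))).aemeasurable.mul
        (hfm.pow_const 2))
  -- integrability of G
  have hGint : IntegrableOn G (Ici (2*M)) := by
    have hbound : IntegrableOn
        (fun s => (1 + (m+2)/(m-1)^2 + m^2/(m-1)^2) * (s^2*(deriv f s)^2 + (f s)^2))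
        (Ici (2*M)) := hfin.const_mul _
    apply Integrable.mono' hbound hGm
    filter_upwards [ae_restrict_mem measurableSet_Ici] with s hs
    have hs' : 2*M ≤ s := hs
    have hs0 : 0 < s := lt_of_lt_of_le ha0 hs
    have hK1 : (0:ℝ) ≤ (m+2)/(m-1)^2 := by positivity
    have hK2 : (0:ℝ) ≤ m^2/(m-1)^2 := by positivity
    have h2 : s*(s-2*M)*(deriv f s)^2 ≤ s^2*(deriv f s)^2 := by
      nlinarith [mul_nonneg (mul_nonneg ha0.le hs0.le) (sq_nonneg (deriv f s))]
    have h1 : 0 ≤ s*(s-2*M)*(deriv f s)^2 := by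
      have : (0:ℝ) ≤ s - 2*M := by linarith
      positivity
    have hVd : 0 < 2*M*m^2/((m-1)^2*s) := by positivity
    have hVub : 2*M*m^2/((m-1)^2*s) ≤ m^2/(m-1)^2 := by
      rw [div_le_div_iff₀ (by positivity) (by positivity)]
      nlinarith [mul_nonneg (mul_nonneg (sq_nonneg m) (sq_nonneg (m-1))) (show (0:ℝ) ≤ s - 2*M by linarith)]
    have e1 := mul_le_mul_of_nonneg_right
      (show (m+2)/(m-1)^2 - 2*M*m^2/((m-1)^2*s) ≤ (m+2)/(m-1)^2 by linarith)
      (sq_nonneg (f s))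
    have e2 := mul_le_mul_of_nonneg_right
      (show -(m^2/(m-1)^2) ≤ (m+2)/(m-1)^2 - 2*M*m^2/((m-1)^2*s) by linarith)
      (sq_nonneg (f s))
    rw [Real.norm_eq_abs, abs_le]
    constructor
    · simp only [hGdef]
      nlinarith [sq_nonneg (f s), sq_nonneg (s * deriv f s), sq_nonneg (deriv f s)]
    · simp only [hGdef]
      nlinarith [sq_nonneg (f s), sq_nonneg (s * deriv f s), sq_nonneg (deriv f s)]
  -- f^2 integrable
  have hf2int : IntegrableOn (fun s => (f s)^2) (Ici (2*M)) := by
    apply Integrable.mono' hfin ((hfm.pow_const 2).aestronglyMeasurable)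
    filter_upwards [] with s
    rw [Real.norm_eq_abs, abs_of_nonneg (sq_nonneg _)]
    nlinarith [sq_nonneg (s * deriv f s), sq_nonneg (f s), sq_nonneg (deriv f s)]
  -- FTC step
  have key : ∀ T, 2*M ≤ T →
      (-(m/(m-1))) * (T - 2*M) * (f T)^2 ≤ ∫ s in (2*M)..T, G s := by
    intro T hT
    set W : ℝ → ℝ := fun s => (-(m/(m-1))) * (s - 2*M) * (f s)^2 with hWdef
    set W' : ℝ → ℝ := fun s =>
      (-(m/(m-1))) * (f s)^2 + (-(m/(m-1))) * (s - 2*M) * (2 * f s * deriv f s) with hW'def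
    have hWc : ContinuousOn W (Icc (2*M) T) := by
      apply ContinuousOn.mul
      · exact (continuousOn_const.mul ((continuousOn_id.sub continuousOn_const)))
      · exact ((hfc.mono Icc_subset_Ici_self).pow 2)
    have hder : ∀ s ∈ Ioo (2*M) T, HasDerivWithinAt W (W' s) (Ioi s) s := by
      intro s hs
      have hfd : HasDerivAt f (deriv f s) s :=
        ((hf.differentiableOn one_ne_zero).differentiableAt (Ici_mem_nhds hs.1)).hasDerivAt
      have h1 : HasDerivAt (fun u : ℝ => (-(m/(m-1))) * (u - 2*M)) (-(m/(m-1))) s := by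
        simpa using ((hasDerivAt_id s).sub_const (2*M)).const_mul (-(m/(m-1)))
      have h2 : HasDerivAt (fun u => (f u)^2) (2 * f s * deriv f s) s := by
        simpa using hfd.fun_pow 2
      exact (h1.mul h2).hasDerivWithinAt
    have hcd : ContinuousOn (fun s => derivWithin f (Ici (2*M)) s) (Ici (2*M)) :=
      hf.continuousOn_derivWithin (uniqueDiffOn_Ici _) le_rfl
    have hhc : ContinuousOn (fun s =>
        (-(m/(m-1))) * (f s)^2 + (-(m/(m-1))) * (s - 2*M) *
          (2 * f s * derivWithin f (Ici (2*M)) s)) (Icc (2*M) T) := by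
      apply ContinuousOn.add
      · exact continuousOn_const.mul ((hfc.mono Icc_subset_Ici_self).pow 2)
      · exact (continuousOn_const.mul (continuousOn_id.sub continuousOn_const)).mul
          ((continuousOn_const.mul (hfc.mono Icc_subset_Ici_self)).mul
            (hcd.mono Icc_subset_Ici_self))
    have hhint : IntervalIntegrable (fun s =>
        (-(m/(m-1))) * (f s)^2 + (-(m/(m-1))) * (s - 2*M) *
          (2 * f s * derivWithin f (Ici (2*M)) s)) volume (2*M) T := by
      apply ContinuousOn.intervalIntegrable
      rwa [uIcc_of_le hT]
    have hW'int : IntervalIntegrable W' volume (2*M) T := by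
      apply hhint.congr
      intro s hs
      rw [uIoc_of_le hT] at hs
      simp only [hW'def]
      rw [derivWithin_of_mem_nhds (Ici_mem_nhds hs.1)]
    have hftc : ∫ s in (2*M)..T, W' s = W T - W (2*M) :=
      intervalIntegral.integral_eq_sub_of_hasDeriv_right_of_le hT hWc hder hW'int
    have hGTint : IntervalIntegrable G volume (2*M) T := by
      apply MeasureTheory.IntegrableOn.intervalIntegrable
      apply hGint.mono_set
      rw [uIcc_of_le hT]
      exact Icc_subset_Ici_self
    have hmono : ∫ s in (2*M)..T, W' s ≤ ∫ s in (2*M)..T, G s := by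
      apply intervalIntegral.integral_mono_on hT hW'int hGTint
      intro s hs
      have := hardy_pointwise m M s (deriv f s) (f s) hm hM hs.1
      simp only [hW'def, hGdef]
      linarith
    have hW0 : W (2*M) = 0 := by simp [hWdef]
    have : W T = (-(m/(m-1))) * (T - 2*M) * (f T)^2 := rfl
    linarith [hftc, hmono]
  -- limit and contradiction
  have hIoi : IntegrableOn G (Ioi (2*M)) := hGint.mono_set Ioi_subset_Ici_self
  have htend : Tendsto (fun T => ∫ s in (2*M)..T, G s) atTop
      (𝓝 (∫ s in Ioi (2*M), G s)) :=
    intervalIntegral_tendsto_integral_Ioi _ hIoi tendsto_id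
  rw [integral_Ici_eq_integral_Ioi]
  by_contra hneg
  push_neg at hneg
  set I := ∫ s in Ioi (2*M), G s with hIdef
  have hI : I < 0 := hneg
  clear_value I
  have hev : ∀ᶠ T in atTop, ∫ s in (2*M)..T, G s < I/2 := by
    have : I < I/2 := by linarith
    exact htend.eventually_lt_const this
  obtain ⟨T0, hT0⟩ := eventually_atTop.1 (hev.and (eventually_ge_atTop (2*M+1)))
  set T1 := max T0 (2*M+1) with hT1def
  have hT1 : 2*M + 1 ≤ T1 := le_max_right _ _
  have hβ : 0 < m/(m-1) := by positivity
  set ε := -I/(2*(m/(m-1))) with hεdef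
  have hε : 0 < ε := div_pos (by linarith) (by positivity)
  clear_value ε
  have claim : ∀ s ∈ Ioi T1, ε * s⁻¹ ≤ (f s)^2 := by
    intro s hsm
    have hs1 : T1 < s := hsm
    have hsa : 2*M ≤ s := by linarith
    have hs0 : 0 < s := by linarith
    have h1 := (hT0 s (le_of_lt (lt_of_le_of_lt (le_max_left _ _) hs1))).1
    have h3 : (-(m/(m-1))) * (s - 2*M) * (f s)^2 < I/2 := lt_of_le_of_lt (key s hsa) h1
    have hεβ : ε * (m/(m-1)) = -I/2 := by
      rw [hεdef]; field_simp
    have h6 : ε * (m/(m-1)) < ((f s)^2 * s) * (m/(m-1)) := by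
      have haux : 0 ≤ 2*M*(m/(m-1))*(f s)^2 :=
        mul_nonneg (mul_nonneg ha0.le hβ.le) (sq_nonneg (f s))
      have e1 : (f s)^2 * s * (m/(m-1)) + (-(m/(m-1)) * (s - 2*M) * (f s)^2)
          = 2*M*(m/(m-1))*(f s)^2 := by ring
      have e2 : ((f s)^2 * s) * (m/(m-1)) = (f s)^2 * s * (m/(m-1)) := by ring
      linarith [hεβ, h3, haux, e1, e2]
    have h7 : ε ≤ (f s)^2 * s := le_of_lt (lt_of_mul_lt_mul_right h6 hβ.le)
    calc ε * s⁻¹ ≤ ((f s)^2 * s) * s⁻¹ := mul_le_mul_of_nonneg_right h7 (inv_nonneg.2 hs0.le)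
      _ = (f s)^2 := by field_simp
  have hsub : Ioi T1 ⊆ Ici (2*M) := by
    intro s hs
    have := mem_Ioi.1 hs
    exact mem_Ici.2 (by linarith)
  have hf2T1 : IntegrableOn (fun s => (f s)^2) (Ioi T1) := hf2int.mono_set hsub
  have hmeas : AEStronglyMeasurable (fun s : ℝ => ε * s⁻¹) (volume.restrict (Ioi T1)) :=
    (measurable_inv.const_mul ε).aestronglyMeasurable
  have hint2 : IntegrableOn (fun s : ℝ => ε * s⁻¹) (Ioi T1) := by
    apply Integrable.mono' hf2T1 hmeas
    filter_upwards [ae_restrict_mem measurableSet_Ioi] with s hs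
    have hs1 : T1 < s := mem_Ioi.1 hs
    have hs0 : 0 < s := by linarith
    rw [Real.norm_eq_abs, abs_of_nonneg (by positivity)]
    exact claim s hs
  have hint3 : IntegrableOn (fun s : ℝ => s⁻¹) (Ioi T1) := by
    have h := hint2.const_mul ε⁻¹
    simp [← mul_assoc, inv_mul_cancel₀ hε.ne'] at h
    exact h
  exact not_IntegrableOn_Ioi_inv hint3
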